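/- Let n \ge 4 be a composite positive integer and let d \ge 2 be a proper divisor of n. Then S_{n-1} \equiv (-1)^{n+d} S_{d-1} \pmod{d}. -/
import Mathlib

lemma derangement_aux (d a : ℕ) (ha : d ∣ a) (ha1 : 1 ≤ a) (j : ℕ) :
    (numDerangements (a + j) : ℤ) ≡ (-1) ^ a * numDerangements j [ZMOD (d : ℤ)] := by
  have hda : ((d : ℤ) ∣ (a : ℤ)) := Int.natCast_dvd_natCast.mpr ha
  have hza : (a : ℤ) ≡ 0 [ZMOD (d : ℤ)] := Int.modEq_zero_iff_dvd.mpr hda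
  induction j with
  | zero =>
    obtain ⟨b, rfl⟩ := Nat.exists_eq_add_of_le ha1
    rw [add_comm 1 b, add_zero, numDerangements_succ]
    have h1 : ((b : ℤ) + 1) * (numDerangements b : ℤ) ≡ 0 * (numDerangements b : ℤ)
        [ZMOD (d : ℤ)] := by
      refine Int.ModEq.mul ?_ (Int.ModEq.refl _)
      simpa [add_comm] using hza
    calc ((b : ℤ) + 1) * (numDerangements b : ℤ) - (-1) ^ b
        ≡ 0 * (numDerangements b : ℤ) - (-1) ^ b [ZMOD (d : ℤ)] := h1.sub (Int.ModEq.refl _)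
      _ = (-1) ^ (b + 1) * (numDerangements 0 : ℤ) := by
          simp [pow_succ]
  | succ j ih =>
    have hrec := numDerangements_succ (a + j)
    push_cast at hrec ⊢
    rw [show a + (j + 1) = (a + j) + 1 from rfl] at *
    rw [hrec]
    have h1 : ((a : ℤ) + j + 1) ≡ ((j : ℤ) + 1) [ZMOD (d : ℤ)] := by
      have := hza.add (Int.ModEq.refl ((j : ℤ) + 1))
      simpa [add_assoc] using this
    calc ((a : ℤ) + j + 1) * (numDerangements (a + j) : ℤ) - (-1) ^ (a + j)
        ≡ ((j : ℤ) + 1) * ((-1) ^ a * numDerangements j) - (-1) ^ (a + j)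
          [ZMOD (d : ℤ)] := (h1.mul ih).sub (Int.ModEq.refl _)
      _ = (-1) ^ a * (((j : ℤ) + 1) * numDerangements j - (-1) ^ j) := by
          rw [pow_add]; ring
      _ = (-1) ^ a * (numDerangements (j + 1) : ℤ) := by
          rw [numDerangements_succ]

/-- If `n ≥ 4` is composite and `d ≥ 2` is a proper divisor of `n`, then
`S_{n-1} ≡ (-1)^(n+d) S_{d-1} (mod d)`. -/
theorem derangement_mod_proper_divisor (n d : ℕ) (hn : 4 ≤ n) (hcomp : ¬ n.Prime)
    (hd2 : 2 ≤ d) (hdvd : d ∣ n) (hdn : d ≠ n) :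
    (numDerangements (n - 1) : ℤ) ≡ (-1) ^ (n + d) * numDerangements (d - 1) [ZMOD (d : ℤ)] := by
  have hdn' : d < n := lt_of_le_of_ne (Nat.le_of_dvd (by omega) hdvd) hdn
  have hdvd' : d ∣ (n - d) := (Nat.dvd_sub hdvd dvd_rfl)
  have h1 : 1 ≤ n - d := by
    have : 2 * d ≤ n := by
      obtain ⟨k, rfl⟩ := hdvd
      have hk : 2 ≤ k := by
        rcases k with _ | _ | k <;> omega
      nlinarith
    omega
  have key := derangement_aux d (n - d) hdvd' h1 (d - 1)
  have heq : (n - d) + (d - 1) = n - 1 := by omega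
  rw [heq] at key
  refine key.trans ?_
  have hpow : ((-1 : ℤ)) ^ (n - d) = (-1) ^ (n + d) := by
    have : n + d = (n - d) + 2 * d := by omega
    rw [this, pow_add, pow_mul]
    simp
  rw [hpow]
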